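/- There is a universal constant C > 0 such that for every probability space (Ω, 𝓕, μ), every real c ∈ (0, 1), and all nonnegative random variables X, Y : Ω → ℝ such that X, Y, X·Y, X·Y^{1+c}, and Y^{1+c} are all integrable, one has E[X·Y] · (E[Y])^c ≤ C · ( E[X·Y^{1+c}] + E[X] · E[Y^{1+c}] ). -/

import Mathlib

open MeasureTheory

lemma key_pointwise (y t c : ℝ) (hy : 0 ≤ y) (ht : 0 ≤ t) (hc : 0 < c) :
    y * t ^ c ≤ y ^ (1 + c) + t ^ (1 + c) := by
  have h1c : (1 : ℝ) + c ≠ 0 := by positivity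
  rcases le_total t y with h | h
  · have : y * t ^ c ≤ y ^ (1 + c) := by
      rw [Real.rpow_add' hy h1c, Real.rpow_one]
      exact mul_le_mul_of_nonneg_left (Real.rpow_le_rpow ht h hc.le) hy
    linarith [Real.rpow_nonneg ht (1 + c)]
  · have : y * t ^ c ≤ t ^ (1 + c) := by
      rw [Real.rpow_add' ht h1c, Real.rpow_one]
      gcongr
    linarith [Real.rpow_nonneg hy (1 + c)]

/-- **A Hölder/Young-type inequality for nonnegative random variables.**  There is a
universal constant `C > 0` such that for every probability space, every `c ∈ (0, 1)`, and
all nonnegative jointly distributed random variables `X, Y` with `X`, `Y`, `X·Y`,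
`X·Y^{1+c}`, `Y^{1+c}` integrable, one has
`E[X·Y]·(E Y)^c ≤ C·(E[X·Y^{1+c}] + E[X]·E[Y^{1+c}])`. -/
theorem nonneg_product_moment_bound :
    ∃ C : ℝ, 0 < C ∧
      ∀ (Ω : Type) (mΩ : MeasurableSpace Ω) (μ : Measure Ω), IsProbabilityMeasure μ →
      ∀ c : ℝ, 0 < c → c < 1 →
      ∀ X Y : Ω → ℝ, (∀ ω, 0 ≤ X ω) → (∀ ω, 0 ≤ Y ω) →
        Integrable X μ → Integrable Y μ →
        Integrable (fun ω => X ω * Y ω) μ →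
        Integrable (fun ω => X ω * Y ω ^ (1 + c)) μ →
        Integrable (fun ω => Y ω ^ (1 + c)) μ →
        (∫ ω, X ω * Y ω ∂μ) * (∫ ω, Y ω ∂μ) ^ c
          ≤ C * ((∫ ω, X ω * Y ω ^ (1 + c) ∂μ)
              + (∫ ω, X ω ∂μ) * (∫ ω, Y ω ^ (1 + c) ∂μ)) := by
  refine ⟨4, by norm_num, ?_⟩
  intro Ω mΩ μ hμ c hc hc1 X Y hX hY hXi hYi hXYi hXY1ci hY1ci
  set m : ℝ := ∫ ω, Y ω ∂μ with hm
  have hm0 : 0 ≤ m := integral_nonneg hY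
  have hIXY : 0 ≤ ∫ ω, X ω * Y ω ∂μ := integral_nonneg fun ω => mul_nonneg (hX ω) (hY ω)
  have hIXY1c : 0 ≤ ∫ ω, X ω * Y ω ^ (1 + c) ∂μ :=
    integral_nonneg fun ω => mul_nonneg (hX ω) (Real.rpow_nonneg (hY ω) _)
  have hIX : 0 ≤ ∫ ω, X ω ∂μ := integral_nonneg hX
  have hIY1c : 0 ≤ ∫ ω, Y ω ^ (1 + c) ∂μ :=
    integral_nonneg fun ω => Real.rpow_nonneg (hY ω) _
  -- Step 1: E[XY] * m^c ≤ E[X Y^{1+c}] + E[X] * m^{1+c}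
  have step1 : (∫ ω, X ω * Y ω ∂μ) * m ^ c
      ≤ (∫ ω, X ω * Y ω ^ (1 + c) ∂μ) + (∫ ω, X ω ∂μ) * m ^ (1 + c) := by
    have := integral_mono (hXYi.mul_const (m ^ c))
      (hXY1ci.add (hXi.mul_const (m ^ (1 + c))))
      (fun ω => by
        have := mul_le_mul_of_nonneg_left
          (key_pointwise (Y ω) m c (hY ω) hm0 hc) (hX ω)
        simpa [mul_add, mul_assoc] using this)
    simpa [integral_mul_const, integral_add hXY1ci (hXi.mul_const (m ^ (1 + c))),
      integral_mul_const] using this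
  -- Step 2: m^{1+c} ≤ 4 * E[Y^{1+c}]
  have step2 : m ^ (1 + c) ≤ 4 * ∫ ω, Y ω ^ (1 + c) ∂μ := by
    have hhalf : (0:ℝ) ≤ m / 2 := by linarith
    have h := integral_mono (hYi.mul_const ((m / 2) ^ c))
      (hY1ci.add (integrable_const ((m / 2) ^ (1 + c))))
      (fun ω => key_pointwise (Y ω) (m / 2) c (hY ω) hhalf hc)
    simp only [Pi.add_apply] at h
    rw [integral_mul_const, integral_add hY1ci (integrable_const _),
      integral_const, probReal_univ, one_smul, ← hm] at h
    -- h : m * (m/2)^c ≤ ∫ Y^{1+c} + (m/2)^{1+c}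
    have hdiv : (m / 2) ^ c = m ^ c / 2 ^ c := Real.div_rpow hm0 (by norm_num : (0:ℝ) ≤ 2) c
    have hdiv1 : (m / 2) ^ (1 + c) = m ^ (1 + c) / 2 ^ (1 + c) :=
      Real.div_rpow hm0 (by norm_num : (0:ℝ) ≤ 2) (1 + c)
    have hm1c : m * m ^ c = m ^ (1 + c) := by
      rw [Real.rpow_add' hm0 (by positivity), Real.rpow_one]
    have h2c : (2:ℝ) ^ (1 + c) = 2 * 2 ^ c := by
      rw [Real.rpow_add' (by norm_num) (by positivity), Real.rpow_one]
    have h2cpos : (0:ℝ) < 2 ^ c := Real.rpow_pos_of_pos (by norm_num) c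
    have h2c4 : (2:ℝ) ^ (1 + c) ≤ 4 := by
      rw [h2c]
      have : (2:ℝ) ^ c ≤ 2 ^ (1:ℝ) :=
        Real.rpow_le_rpow_of_exponent_le (by norm_num) hc1.le
      simpa [Real.rpow_one] using by linarith
    rw [hdiv, hdiv1, h2c] at h
    -- h : m * (m^c / 2^c) ≤ ∫ Y^{1+c} + m^{1+c} / (2 * 2^c)
    have key : m ^ (1 + c) ≤ 2 ^ (1 + c) * ∫ ω, Y ω ^ (1 + c) ∂μ := by
      rw [h2c]
      have h' : m ^ (1 + c) / 2 ^ c - m ^ (1 + c) / (2 * 2 ^ c)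
          ≤ ∫ ω, Y ω ^ (1 + c) ∂μ := by
        have : m * (m ^ c / 2 ^ c) = m ^ (1 + c) / 2 ^ c := by
          rw [← hm1c]; ring
        linarith [h, this.symm.le, this.le]
      have heq : m ^ (1 + c) / 2 ^ c - m ^ (1 + c) / (2 * 2 ^ c)
          = m ^ (1 + c) / (2 * 2 ^ c) := by
        field_simp; ring
      rw [heq] at h'
      calc m ^ (1 + c) = (2 * 2 ^ c) * (m ^ (1 + c) / (2 * 2 ^ c)) := by
            field_simp
        _ ≤ (2 * 2 ^ c) * ∫ ω, Y ω ^ (1 + c) ∂μ := by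
            apply mul_le_mul_of_nonneg_left h' (by positivity)
    calc m ^ (1 + c) ≤ 2 ^ (1 + c) * ∫ ω, Y ω ^ (1 + c) ∂μ := key
      _ ≤ 4 * ∫ ω, Y ω ^ (1 + c) ∂μ := by
          apply mul_le_mul_of_nonneg_right h2c4 hIY1c
  calc (∫ ω, X ω * Y ω ∂μ) * m ^ c
      ≤ (∫ ω, X ω * Y ω ^ (1 + c) ∂μ) + (∫ ω, X ω ∂μ) * m ^ (1 + c) := step1
    _ ≤ (∫ ω, X ω * Y ω ^ (1 + c) ∂μ)
        + (∫ ω, X ω ∂μ) * (4 * ∫ ω, Y ω ^ (1 + c) ∂μ) := by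
          gcongr
    _ ≤ 4 * ((∫ ω, X ω * Y ω ^ (1 + c) ∂μ)
        + (∫ ω, X ω ∂μ) * (∫ ω, Y ω ^ (1 + c) ∂μ)) := by nlinarith
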